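/- arXiv:1702.03816 — 9 statements merged into one kernel-verified Lean document; each statement's English description precedes it below -/
import Mathlib

section
/- Let I ⊆ ℝ be an open interval, ω : I → ℝ differentiable, k ∈ ℝ, and let z : I → ℝ be a twice differentiable function with z(x) ≠ 0 for all x ∈ I satisfying the Ermakov-type equation z'' = ω·z + k/z³ on I. Then β := z² is three times differentiable on I and satisfies the third-order linear ODE β''' = 2ω'·β + 4ω·β' on I. -/
/-- If `z` (nonvanishing) solves the Ermakov-type equation `z'' = ω·z + k/z³`
on an open interval with `ω` differentiable, then `β := z²` is three times differentiable
and satisfies the third-order linear ODE `β''' = 2ω'·β + 4ω·β'`. -/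
theorem square_of_ermakov_solution_third_order (a b : ℝ)
    (ω ω' z z' z'' : ℝ → ℝ) (k : ℝ)
    (hω : ∀ x ∈ Set.Ioo a b, HasDerivAt ω (ω' x) x)
    (hz : ∀ x ∈ Set.Ioo a b, HasDerivAt z (z' x) x)
    (hz' : ∀ x ∈ Set.Ioo a b, HasDerivAt z' (z'' x) x)
    (hz0 : ∀ x ∈ Set.Ioo a b, z x ≠ 0)
    (hzeq : ∀ x ∈ Set.Ioo a b, z'' x = ω x * z x + k / z x ^ 3) :
    ∃ β' β'' β''' : ℝ → ℝ, ∀ x ∈ Set.Ioo a b,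
      HasDerivAt (fun t => z t ^ 2) (β' x) x ∧
      HasDerivAt β' (β'' x) x ∧
      HasDerivAt β'' (β''' x) x ∧
      β''' x = 2 * ω' x * z x ^ 2 + 4 * ω x * β' x := by
  refine ⟨fun x => 2 * z x * z' x,
    fun x => 2 * z' x ^ 2 + 2 * ω x * z x ^ 2 + 2 * k / z x ^ 2,
    fun x => 4 * z' x * z'' x + 2 * ω' x * z x ^ 2 + 4 * ω x * z x * z' x
      - 4 * k * z' x / z x ^ 3, fun x hx => ?_⟩
  have hzx := hz x hx
  have hz'x := hz' x hx
  have hωx := hω x hx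
  have hz0x := hz0 x hx
  refine ⟨?_, ?_, ?_, ?_⟩
  · have := hzx.fun_pow 2
    convert! this using 1; ring
  · have h1 : HasDerivAt (fun t => 2 * z t * z' t)
        (2 * z' x * z' x + 2 * z x * z'' x) x := by
      have := ((hzx.const_mul 2).fun_mul hz'x)
      convert! this using 1
      try ring
    have heq := hzeq x hx
    convert h1 using 1
    rw [heq]
    field_simp
    ring
  · have hinv : HasDerivAt (fun t => 2 * k / z t ^ 2)
        (-(4 * k * z' x / z x ^ 3)) x := by
      have hp : HasDerivAt (fun t => z t ^ 2) (2 * z x * z' x) x := by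
        have := hzx.fun_pow 2; convert! this using 1; ring
      have hne : z x ^ 2 ≠ 0 := pow_ne_zero 2 hz0x
      have := hp.fun_inv hne
      have h2 := this.const_mul (2 * k)
      have hfe : (fun t => 2 * k / z t ^ 2) = fun t => 2 * k * (z t ^ 2)⁻¹ := by
        funext t; rw [div_eq_mul_inv]
      rw [hfe]
      convert! h2 using 1
      field_simp
      ring
    have h1 : HasDerivAt (fun t => 2 * z' t ^ 2) (4 * z' x * z'' x) x := by
      have := (hz'x.fun_pow 2).const_mul 2
      convert! this using 1; ring
    have h2 : HasDerivAt (fun t => 2 * ω t * z t ^ 2)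
        (2 * ω' x * z x ^ 2 + 4 * ω x * z x * z' x) x := by
      have hp : HasDerivAt (fun t => z t ^ 2) (2 * z x * z' x) x := by
        have := hzx.fun_pow 2; convert! this using 1; ring
      have := ((hωx.const_mul 2).fun_mul hp)
      convert! this using 1; ring
    have := (h1.fun_add h2).fun_add hinv
    convert! this using 1
    ring
  · have heq := hzeq x hx
    simp only [heq]
    field_simp
    ring
end

section
/- Let I ⊆ ℝ be an open interval, ω : I → ℝ continuous, and let y₁, y₂ : I → ℝ be twice differentiable with y₁'' = ω·y₁ and y₂'' = ω·y₂ on I. Let A, B, C, W be real constants such that y₁(x)·y₂'(x) − y₁'(x)·y₂(x) = W for all x ∈ I, and suppose A·y₁(x)² + B·y₁(x)·y₂(x) + C·y₂(x)² > 0 for all x ∈ I. Then z(x) := √(A·y₁(x)² + B·y₁(x)·y₂(x) + C·y₂(x)²) is twice differentiable on I and satisfies z'' = ω·z + k/z³ on I, where k = (A·C − B²/4)·W². -/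
/-- If `y₁, y₂` solve `y'' = ω·y` on an open interval with constant Wronskian
`W`, and `A·y₁² + B·y₁·y₂ + C·y₂² > 0` there, then `z := √(A·y₁² + B·y₁·y₂ + C·y₂²)` is twice
differentiable and satisfies the Ermakov-type equation `z'' = ω·z + k/z³`, where
`k = (A·C − B²/4)·W²`. -/
theorem quadratic_combination_solves_ermakov (a b : ℝ)
    (ω y₁ y₁' y₁'' y₂ y₂' y₂'' : ℝ → ℝ)
    (hω : ContinuousOn ω (Set.Ioo a b))
    (hy₁ : ∀ x ∈ Set.Ioo a b, HasDerivAt y₁ (y₁' x) x)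
    (hy₁' : ∀ x ∈ Set.Ioo a b, HasDerivAt y₁' (y₁'' x) x)
    (hy₁eq : ∀ x ∈ Set.Ioo a b, y₁'' x = ω x * y₁ x)
    (hy₂ : ∀ x ∈ Set.Ioo a b, HasDerivAt y₂ (y₂' x) x)
    (hy₂' : ∀ x ∈ Set.Ioo a b, HasDerivAt y₂' (y₂'' x) x)
    (hy₂eq : ∀ x ∈ Set.Ioo a b, y₂'' x = ω x * y₂ x)
    (A B C W : ℝ)
    (hW : ∀ x ∈ Set.Ioo a b, y₁ x * y₂' x - y₁' x * y₂ x = W)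
    (hpos : ∀ x ∈ Set.Ioo a b,
      0 < A * y₁ x ^ 2 + B * y₁ x * y₂ x + C * y₂ x ^ 2) :
    ∃ zd zdd : ℝ → ℝ, ∀ x ∈ Set.Ioo a b,
      HasDerivAt (fun t => Real.sqrt (A * y₁ t ^ 2 + B * y₁ t * y₂ t + C * y₂ t ^ 2))
        (zd x) x ∧
      HasDerivAt zd (zdd x) x ∧
      zdd x = ω x * Real.sqrt (A * y₁ x ^ 2 + B * y₁ x * y₂ x + C * y₂ x ^ 2) +
        (A * C - B ^ 2 / 4) * W ^ 2 /
          Real.sqrt (A * y₁ x ^ 2 + B * y₁ x * y₂ x + C * y₂ x ^ 2) ^ 3 := by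
  refine ⟨fun t => (2 * A * y₁ t * y₁' t + B * (y₁' t * y₂ t + y₁ t * y₂' t)
        + 2 * C * y₂ t * y₂' t) /
      (2 * Real.sqrt (A * y₁ t ^ 2 + B * y₁ t * y₂ t + C * y₂ t ^ 2)),
    fun t =>
      ((2 * A * (y₁' t ^ 2 + y₁ t * y₁'' t)
          + B * (y₁'' t * y₂ t + 2 * y₁' t * y₂' t + y₁ t * y₂'' t)
          + 2 * C * (y₂' t ^ 2 + y₂ t * y₂'' t)) *
        (2 * Real.sqrt (A * y₁ t ^ 2 + B * y₁ t * y₂ t + C * y₂ t ^ 2))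
      - (2 * A * y₁ t * y₁' t + B * (y₁' t * y₂ t + y₁ t * y₂' t)
          + 2 * C * y₂ t * y₂' t) *
        (2 * ((2 * A * y₁ t * y₁' t + B * (y₁' t * y₂ t + y₁ t * y₂' t)
          + 2 * C * y₂ t * y₂' t) /
          (2 * Real.sqrt (A * y₁ t ^ 2 + B * y₁ t * y₂ t + C * y₂ t ^ 2)))))
      / (2 * Real.sqrt (A * y₁ t ^ 2 + B * y₁ t * y₂ t + C * y₂ t ^ 2)) ^ 2,
    ?_⟩
  intro x hx
  have hQpos := hpos x hx
  have hs : 0 < Real.sqrt (A * y₁ x ^ 2 + B * y₁ x * y₂ x + C * y₂ x ^ 2) :=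
    Real.sqrt_pos.2 hQpos
  have hs2 : Real.sqrt (A * y₁ x ^ 2 + B * y₁ x * y₂ x + C * y₂ x ^ 2) ^ 2
      = A * y₁ x ^ 2 + B * y₁ x * y₂ x + C * y₂ x ^ 2 := Real.sq_sqrt hQpos.le
  -- derivative of Q
  have hQd : HasDerivAt (fun t => A * y₁ t ^ 2 + B * y₁ t * y₂ t + C * y₂ t ^ 2)
      (2 * A * y₁ x * y₁' x + B * (y₁' x * y₂ x + y₁ x * y₂' x)
        + 2 * C * y₂ x * y₂' x) x := by
    have h := ((((hy₁ x hx).pow 2).const_mul A).add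
        (((hy₁ x hx).const_mul B).mul (hy₂ x hx))).add
        (((hy₂ x hx).pow 2).const_mul C)
    refine h.congr_deriv ?_
    ring
  -- derivative of sqrt Q
  have hsd : HasDerivAt
      (fun t => Real.sqrt (A * y₁ t ^ 2 + B * y₁ t * y₂ t + C * y₂ t ^ 2))
      ((2 * A * y₁ x * y₁' x + B * (y₁' x * y₂ x + y₁ x * y₂' x)
          + 2 * C * y₂ x * y₂' x) /
        (2 * Real.sqrt (A * y₁ x ^ 2 + B * y₁ x * y₂ x + C * y₂ x ^ 2))) x :=
    hQd.sqrt (ne_of_gt hQpos)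
  refine ⟨hsd, ?_, ?_⟩
  · -- derivative of zd = Q' / (2 * sqrt Q)
    have hQ'd : HasDerivAt
        (fun t => 2 * A * y₁ t * y₁' t + B * (y₁' t * y₂ t + y₁ t * y₂' t)
          + 2 * C * y₂ t * y₂' t)
        (2 * A * (y₁' x ^ 2 + y₁ x * y₁'' x)
          + B * (y₁'' x * y₂ x + 2 * y₁' x * y₂' x + y₁ x * y₂'' x)
          + 2 * C * (y₂' x ^ 2 + y₂ x * y₂'' x)) x := by
      have h := ((((hy₁ x hx).const_mul (2 * A)).mul (hy₁' x hx)).add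
          ((((hy₁' x hx).mul (hy₂ x hx)).add ((hy₁ x hx).mul (hy₂' x hx))).const_mul B)).add
          (((hy₂ x hx).const_mul (2 * C)).mul (hy₂' x hx))
      refine h.congr_deriv ?_
      ring
    have hden : HasDerivAt
        (fun t => 2 * Real.sqrt (A * y₁ t ^ 2 + B * y₁ t * y₂ t + C * y₂ t ^ 2))
        (2 * ((2 * A * y₁ x * y₁' x + B * (y₁' x * y₂ x + y₁ x * y₂' x)
            + 2 * C * y₂ x * y₂' x) /
          (2 * Real.sqrt (A * y₁ x ^ 2 + B * y₁ x * y₂ x + C * y₂ x ^ 2)))) x :=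
      hsd.const_mul 2
    exact hQ'd.div hden (by positivity)
  · -- the Ermakov equation
    have hW' := hW x hx
    have h1 := hy₁eq x hx
    have h2 := hy₂eq x hx
    beta_reduce
    set s := Real.sqrt (A * y₁ x ^ 2 + B * y₁ x * y₂ x + C * y₂ x ^ 2) with hsdef
    have key : 2 * (2 * A * (y₁' x ^ 2 + y₁ x * y₁'' x)
          + B * (y₁'' x * y₂ x + 2 * y₁' x * y₂' x + y₁ x * y₂'' x)
          + 2 * C * (y₂' x ^ 2 + y₂ x * y₂'' x)) *
          (A * y₁ x ^ 2 + B * y₁ x * y₂ x + C * y₂ x ^ 2)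
        - (2 * A * y₁ x * y₁' x + B * (y₁' x * y₂ x + y₁ x * y₂' x)
          + 2 * C * y₂ x * y₂' x) ^ 2
      = 4 * ω x * (A * y₁ x ^ 2 + B * y₁ x * y₂ x + C * y₂ x ^ 2) ^ 2
        + 4 * (A * C - B ^ 2 / 4) * W ^ 2 := by
      rw [h1, h2, ← hW']
      ring
    rw [← hs2] at key
    have hsne : s ≠ 0 := ne_of_gt hs
    clear_value s
    field_simp
    linear_combination 4 * key
end

section
/- Let ω : ℝ → ℝ be continuously differentiable, and let y₁, y₂ : ℝ → ℝ be twice differentiable solutions of y'' = ω·y whose Wronskian y₁·y₂' − y₁'·y₂ is a nonzero constant W. Then every three times differentiable function β : ℝ → ℝ satisfying β''' = 2ω'·β + 4ω·β' on ℝ can be written as β = A·y₁² + B·y₁·y₂ + C·y₂² for some real constants A, B, C; that is, the solution set of the third-order equation coincides with the span of y₁², y₁·y₂, y₂². -/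
/-- Auxiliary conservation law: if `q₁, q₂` solve `q'' = ω·q` and `β` solves
`β''' = 2ω'·β + 4ω·β'`, then `2(q₁'q₂' − ω q₁q₂)β − (q₁q₂' + q₁'q₂)β' + q₁q₂β''`
is constant (equals its value at `0`). -/
lemma quad_const_aux (ω ω' : ℝ → ℝ) (hω : ∀ x, HasDerivAt ω (ω' x) x)
    (q₁ q₁' q₂ q₂' : ℝ → ℝ)
    (hq₁ : ∀ x, HasDerivAt q₁ (q₁' x) x) (hq₁' : ∀ x, HasDerivAt q₁' (ω x * q₁ x) x)
    (hq₂ : ∀ x, HasDerivAt q₂ (q₂' x) x) (hq₂' : ∀ x, HasDerivAt q₂' (ω x * q₂ x) x)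
    (β β' β'' β''' : ℝ → ℝ)
    (hβ : ∀ x, HasDerivAt β (β' x) x) (hβ' : ∀ x, HasDerivAt β' (β'' x) x)
    (hβ'' : ∀ x, HasDerivAt β'' (β''' x) x)
    (hβeq : ∀ x, β''' x = 2 * ω' x * β x + 4 * ω x * β' x)
    (x : ℝ) :
    2*(q₁' x * q₂' x - ω x * (q₁ x * q₂ x))*β x - (q₁ x * q₂' x + q₁' x * q₂ x)*β' x
      + q₁ x * q₂ x * β'' x
    = 2*(q₁' 0 * q₂' 0 - ω 0 * (q₁ 0 * q₂ 0))*β 0 - (q₁ 0 * q₂' 0 + q₁' 0 * q₂ 0)*β' 0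
      + q₁ 0 * q₂ 0 * β'' 0 := by
  set g : ℝ → ℝ := fun x => 2*(q₁' x * q₂' x - ω x * (q₁ x * q₂ x))*β x
      - (q₁ x * q₂' x + q₁' x * q₂ x)*β' x + q₁ x * q₂ x * β'' x with hg
  have H : ∀ y, HasDerivAt g 0 y := by
    intro y
    have h := (((((hq₁' y).mul (hq₂' y)).sub ((hω y).mul ((hq₁ y).mul (hq₂ y)))).const_mul
        (2:ℝ)).mul (hβ y)).sub
        ((((hq₁ y).mul (hq₂' y)).add ((hq₁' y).mul (hq₂ y))).mul (hβ' y)) |>.add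
        (((hq₁ y).mul (hq₂ y)).mul (hβ'' y))
    exact h.congr_deriv (by simp only [Pi.mul_apply, Pi.sub_apply, Pi.add_apply]; rw [hβeq]; ring)
  have hdiff : Differentiable ℝ g := fun y => (H y).differentiableAt
  have hderiv : ∀ y, deriv g y = 0 := fun y => (H y).deriv
  exact is_const_of_deriv_eq_zero hdiff hderiv x 0

/-- If `y₁, y₂` solve `y'' = ω·y` on ℝ (`ω` continuously differentiable) with
nonzero constant Wronskian `W`, then every solution `β` of the third-order equation
`β''' = 2ω'·β + 4ω·β'` is a linear combination `β = A·y₁² + B·y₁·y₂ + C·y₂²`. -/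
theorem third_order_solutions_spanned_by_products
    (ω ω' y₁ y₁' y₁'' y₂ y₂' y₂'' : ℝ → ℝ)
    (hω : ∀ x, HasDerivAt ω (ω' x) x) (hω' : Continuous ω')
    (hy₁ : ∀ x, HasDerivAt y₁ (y₁' x) x)
    (hy₁' : ∀ x, HasDerivAt y₁' (y₁'' x) x)
    (hy₁eq : ∀ x, y₁'' x = ω x * y₁ x)
    (hy₂ : ∀ x, HasDerivAt y₂ (y₂' x) x)
    (hy₂' : ∀ x, HasDerivAt y₂' (y₂'' x) x)
    (hy₂eq : ∀ x, y₂'' x = ω x * y₂ x)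
    (W : ℝ) (hW0 : W ≠ 0)
    (hW : ∀ x, y₁ x * y₂' x - y₁' x * y₂ x = W)
    (β β' β'' β''' : ℝ → ℝ)
    (hβ : ∀ x, HasDerivAt β (β' x) x)
    (hβ' : ∀ x, HasDerivAt β' (β'' x) x)
    (hβ'' : ∀ x, HasDerivAt β'' (β''' x) x)
    (hβeq : ∀ x, β''' x = 2 * ω' x * β x + 4 * ω x * β' x) :
    ∃ A B C : ℝ, ∀ x, β x = A * y₁ x ^ 2 + B * (y₁ x * y₂ x) + C * y₂ x ^ 2 := by
  have hq₁' : ∀ x, HasDerivAt y₁' (ω x * y₁ x) x := fun x => hy₁eq x ▸ hy₁' x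
  have hq₂' : ∀ x, HasDerivAt y₂' (ω x * y₂ x) x := fun x => hy₂eq x ▸ hy₂' x
  -- three conserved quantities
  have hA := quad_const_aux ω ω' hω y₂ y₂' y₂ y₂' hy₂ hq₂' hy₂ hq₂' β β' β'' β''' hβ hβ' hβ'' hβeq
  have hB := quad_const_aux ω ω' hω y₁ y₁' y₂ y₂' hy₁ hq₁' hy₂ hq₂' β β' β'' β''' hβ hβ' hβ'' hβeq
  have hC := quad_const_aux ω ω' hω y₁ y₁' y₁ y₁' hy₁ hq₁' hy₁ hq₁' β β' β'' β''' hβ hβ' hβ'' hβeq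
  set gA : ℝ := 2*(y₂' 0 * y₂' 0 - ω 0 * (y₂ 0 * y₂ 0))*β 0 - (y₂ 0 * y₂' 0 + y₂' 0 * y₂ 0)*β' 0
      + y₂ 0 * y₂ 0 * β'' 0 with hgA
  set gB : ℝ := 2*(y₁' 0 * y₂' 0 - ω 0 * (y₁ 0 * y₂ 0))*β 0 - (y₁ 0 * y₂' 0 + y₁' 0 * y₂ 0)*β' 0
      + y₁ 0 * y₂ 0 * β'' 0 with hgB
  set gC : ℝ := 2*(y₁' 0 * y₁' 0 - ω 0 * (y₁ 0 * y₁ 0))*β 0 - (y₁ 0 * y₁' 0 + y₁' 0 * y₁ 0)*β' 0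
      + y₁ 0 * y₁ 0 * β'' 0 with hgC
  refine ⟨gA / (2*W^2), -gB / W^2, gC / (2*W^2), fun x => ?_⟩
  -- Cramer identity at x
  have key : y₁ x ^ 2 * gA - 2 * (y₁ x * y₂ x) * gB + y₂ x ^ 2 * gC = 2 * W^2 * β x := by
    rw [← hA x, ← hB x, ← hC x]
    have h := hW x
    linear_combination (2 * β x * (y₁ x * y₂' x - y₁' x * y₂ x + W)) * h
  have h2W : (2:ℝ) * W^2 ≠ 0 := by positivity
  field_simp
  linear_combination (-1) * key
end

section
/- Let ω : ℝ → ℝ be continuously differentiable, k ∈ ℝ, and let z : ℝ → ℝ be twice differentiable with z(x) > 0 for all x satisfying z'' = ω·z + k/z³ on ℝ. Let y₁, y₂ : ℝ → ℝ be twice differentiable solutions of y'' = ω·y whose Wronskian y₁·y₂' − y₁'·y₂ is a nonzero constant W. Then there exist real constants A, B, C such that z(x)² = A·y₁(x)² + B·y₁(x)·y₂(x) + C·y₂(x)² for all x ∈ ℝ and (A·C − B²/4)·W² = k. -/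
lemma ermakov_invariant_const (k : ℝ) (ω z z' z'' : ℝ → ℝ)
    (hz : ∀ x, HasDerivAt z (z' x) x)
    (hz' : ∀ x, HasDerivAt z' (z'' x) x)
    (hzpos : ∀ x, 0 < z x)
    (hzeq : ∀ x, z'' x = ω x * z x + k / z x ^ 3)
    (u u' u'' v v' v'' : ℝ → ℝ)
    (hu : ∀ x, HasDerivAt u (u' x) x)
    (hu' : ∀ x, HasDerivAt u' (u'' x) x)
    (hueq : ∀ x, u'' x = ω x * u x)
    (hv : ∀ x, HasDerivAt v (v' x) x)
    (hv' : ∀ x, HasDerivAt v' (v'' x) x)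
    (hveq : ∀ x, v'' x = ω x * v x) :
    ∀ x, (z x * u' x - z' x * u x) * (z x * v' x - z' x * v x) + k * u x * v x / z x ^ 2
       = (z 0 * u' 0 - z' 0 * u 0) * (z 0 * v' 0 - z' 0 * v 0) + k * u 0 * v 0 / z 0 ^ 2 := by
  set F : ℝ → ℝ := fun x =>
    (z x * u' x - z' x * u x) * (z x * v' x - z' x * v x) + k * u x * v x / z x ^ 2 with hF
  have hFd : ∀ x, HasDerivAt F 0 x := by
    intro x
    have hzne : z x ≠ 0 := (hzpos x).ne'
    have h1 : HasDerivAt (fun x => z x * u' x - z' x * u x)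
        (z x * u'' x - z'' x * u x) x := by
      have := ((hz x).mul (hu' x)).sub ((hz' x).mul (hu x))
      exact this.congr_deriv (by ring)
    have h2 : HasDerivAt (fun x => z x * v' x - z' x * v x)
        (z x * v'' x - z'' x * v x) x := by
      have := ((hz x).mul (hv' x)).sub ((hz' x).mul (hv x))
      exact this.congr_deriv (by ring)
    have h3 : HasDerivAt (fun x => k * u x * v x / z x ^ 2)
        (((k * u' x * v x + k * u x * v' x) * z x ^ 2
          - k * u x * v x * (2 * z x * z' x)) / (z x ^ 2) ^ 2) x := by
      have hnum : HasDerivAt (fun x => k * u x * v x)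
          (k * u' x * v x + k * u x * v' x) x := by
        have := (((hu x).const_mul k).mul (hv x))
        exact this.congr_deriv (by ring)
      have hden : HasDerivAt (fun x => z x ^ 2) (2 * z x * z' x) x := by
        have := (hz x).pow 2
        exact this.congr_deriv (by norm_num)
      exact hnum.div hden (pow_ne_zero 2 hzne)
    have := (h1.mul h2).add h3
    refine this.congr_deriv ?_
    rw [hzeq x, hueq x, hveq x]
    field_simp
    ring
  have hdiff : Differentiable ℝ F := fun x => (hFd x).differentiableAt
  intro x
  exact is_const_of_deriv_eq_zero hdiff (fun x => (hFd x).deriv) x 0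

/-- If `z > 0` solves the Ermakov-type equation `z'' = ω·z + k/z³` on ℝ and
`y₁, y₂` solve `y'' = ω·y` with nonzero constant Wronskian `W`, then
`z² = A·y₁² + B·y₁·y₂ + C·y₂²` for constants `A, B, C` with `(A·C − B²/4)·W² = k`. -/
theorem ermakov_solution_pinney_representation
    (ω ω' : ℝ → ℝ) (k : ℝ) (z z' z'' : ℝ → ℝ)
    (hω : ∀ x, HasDerivAt ω (ω' x) x) (hω' : Continuous ω')
    (hz : ∀ x, HasDerivAt z (z' x) x)
    (hz' : ∀ x, HasDerivAt z' (z'' x) x)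
    (hzpos : ∀ x, 0 < z x)
    (hzeq : ∀ x, z'' x = ω x * z x + k / z x ^ 3)
    (y₁ y₁' y₁'' y₂ y₂' y₂'' : ℝ → ℝ)
    (hy₁ : ∀ x, HasDerivAt y₁ (y₁' x) x)
    (hy₁' : ∀ x, HasDerivAt y₁' (y₁'' x) x)
    (hy₁eq : ∀ x, y₁'' x = ω x * y₁ x)
    (hy₂ : ∀ x, HasDerivAt y₂ (y₂' x) x)
    (hy₂' : ∀ x, HasDerivAt y₂' (y₂'' x) x)
    (hy₂eq : ∀ x, y₂'' x = ω x * y₂ x)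
    (W : ℝ) (hW0 : W ≠ 0)
    (hW : ∀ x, y₁ x * y₂' x - y₁' x * y₂ x = W) :
    ∃ A B C : ℝ,
      (∀ x, z x ^ 2 = A * y₁ x ^ 2 + B * (y₁ x * y₂ x) + C * y₂ x ^ 2) ∧
      (A * C - B ^ 2 / 4) * W ^ 2 = k := by
  have I11 := ermakov_invariant_const k ω z z' z'' hz hz' hzpos hzeq
    y₁ y₁' y₁'' y₁ y₁' y₁'' hy₁ hy₁' hy₁eq hy₁ hy₁' hy₁eq
  have I12 := ermakov_invariant_const k ω z z' z'' hz hz' hzpos hzeq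
    y₁ y₁' y₁'' y₂ y₂' y₂'' hy₁ hy₁' hy₁eq hy₂ hy₂' hy₂eq
  have I22 := ermakov_invariant_const k ω z z' z'' hz hz' hzpos hzeq
    y₂ y₂' y₂'' y₂ y₂' y₂'' hy₂ hy₂' hy₂eq hy₂ hy₂' hy₂eq
  set c11 := (z 0 * y₁' 0 - z' 0 * y₁ 0) * (z 0 * y₁' 0 - z' 0 * y₁ 0)
      + k * y₁ 0 * y₁ 0 / z 0 ^ 2 with hc11
  set c12 := (z 0 * y₁' 0 - z' 0 * y₁ 0) * (z 0 * y₂' 0 - z' 0 * y₂ 0)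
      + k * y₁ 0 * y₂ 0 / z 0 ^ 2 with hc12
  set c22 := (z 0 * y₂' 0 - z' 0 * y₂ 0) * (z 0 * y₂' 0 - z' 0 * y₂ 0)
      + k * y₂ 0 * y₂ 0 / z 0 ^ 2 with hc22
  refine ⟨c22 / W ^ 2, -2 * c12 / W ^ 2, c11 / W ^ 2, ?_, ?_⟩
  · intro x
    have hzne : z x ≠ 0 := (hzpos x).ne'
    have h11 := I11 x
    have h12 := I12 x
    have h22 := I22 x
    have hWx := hW x
    -- z x * W = y₁ x * q - y₂ x * p with p, q the bracket terms
    have key : z x * W = y₁ x * (z x * y₂' x - z' x * y₂ x)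
        - y₂ x * (z x * y₁' x - z' x * y₁ x) := by
      rw [← hWx]; ring
    -- square it and substitute invariants
    have sq : z x ^ 2 * W ^ 2
        = y₁ x ^ 2 * (z x * y₂' x - z' x * y₂ x) ^ 2
          - 2 * (y₁ x * y₂ x) * ((z x * y₁' x - z' x * y₁ x) * (z x * y₂' x - z' x * y₂ x))
          + y₂ x ^ 2 * (z x * y₁' x - z' x * y₁ x) ^ 2 := by
      linear_combination (z x * W + (y₁ x * (z x * y₂' x - z' x * y₂ x)
        - y₂ x * (z x * y₁' x - z' x * y₁ x))) * key
    have e22 : (z x * y₂' x - z' x * y₂ x) ^ 2 = c22 - k * y₂ x * y₂ x / z x ^ 2 := by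
      rw [← h22]; ring
    have e11 : (z x * y₁' x - z' x * y₁ x) ^ 2 = c11 - k * y₁ x * y₁ x / z x ^ 2 := by
      rw [← h11]; ring
    have e12 : (z x * y₁' x - z' x * y₁ x) * (z x * y₂' x - z' x * y₂ x)
        = c12 - k * y₁ x * y₂ x / z x ^ 2 := by
      rw [← h12]; ring
    rw [e22, e11, e12] at sq
    have sq2 : z x ^ 2 * W ^ 2
        = y₁ x ^ 2 * c22 - 2 * (y₁ x * y₂ x) * c12 + y₂ x ^ 2 * c11 := by
      rw [sq]; field_simp; ring
    have hW2 : W ^ 2 ≠ 0 := pow_ne_zero 2 hW0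
    field_simp
    linear_combination sq2
  · have hzne : z 0 ≠ 0 := (hzpos 0).ne'
    have hW0' := hW 0
    have key : c11 * c22 - c12 ^ 2 = k * W ^ 2 := by
      rw [hc11, hc12, hc22, ← hW0']
      field_simp
      ring
    clear_value c11 c12 c22
    field_simp
    linear_combination 4 * key
end

section
/- Let λ ∈ ℂ and q₁, q₂ : ℝ → ℂ be continuous, let x₀ ∈ ℝ, and let f = (f₁, f₂) be a differentiable ℂ²-valued function on ℝ satisfying the Dirac equation f₁' = λ·f₁ + q₁·f₂, f₂' = q₂·f₁ − λ·f₂. Then for all x ∈ ℝ the squared components satisfy the integro-differential determining equations: (f₁²)'(x) − 2λ·f₁(x)² − 2q₁(x)·( f₁(x₀)·f₂(x₀) + ∫_{x₀}^{x} (q₂(t)·f₁(t)² + q₁(t)·f₂(t)²) dt ) = 0 and (f₂²)'(x) + 2λ·f₂(x)² − 2q₂(x)·( f₁(x₀)·f₂(x₀) + ∫_{x₀}^{x} (q₂(t)·f₁(t)² + q₁(t)·f₂(t)²) dt ) = 0. -/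
/-- For a solution `(f₁, f₂)` of the Dirac equation, eliminating the product
`f₁·f₂` by integration yields the integro-differential determining equations for the
squares `f₁²`, `f₂²`. -/
theorem dirac_squares_integro_differential (lam : ℂ) (q₁ q₂ : ℝ → ℂ)
    (hq₁ : Continuous q₁) (hq₂ : Continuous q₂) (x₀ : ℝ)
    (f₁ f₂ : ℝ → ℂ)
    (hf₁ : ∀ x, HasDerivAt f₁ (lam * f₁ x + q₁ x * f₂ x) x)
    (hf₂ : ∀ x, HasDerivAt f₂ (q₂ x * f₁ x - lam * f₂ x) x) :
    ∀ x : ℝ,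
      deriv (fun t => f₁ t ^ 2) x - 2 * lam * f₁ x ^ 2 -
        2 * q₁ x * (f₁ x₀ * f₂ x₀ +
          ∫ t in x₀..x, (q₂ t * f₁ t ^ 2 + q₁ t * f₂ t ^ 2)) = 0 ∧
      deriv (fun t => f₂ t ^ 2) x + 2 * lam * f₂ x ^ 2 -
        2 * q₂ x * (f₁ x₀ * f₂ x₀ +
          ∫ t in x₀..x, (q₂ t * f₁ t ^ 2 + q₁ t * f₂ t ^ 2)) = 0 := by
  intro x
  have hc₁ : Continuous f₁ := continuous_iff_continuousAt.2 fun t => (hf₁ t).continuousAt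
  have hc₂ : Continuous f₂ := continuous_iff_continuousAt.2 fun t => (hf₂ t).continuousAt
  have hg : ∀ t, HasDerivAt (fun s => f₁ s * f₂ s)
      (q₂ t * f₁ t ^ 2 + q₁ t * f₂ t ^ 2) t := by
    intro t
    have := (hf₁ t).fun_mul (hf₂ t)
    refine this.congr_deriv ?_
    ring
  have hint : (∫ t in x₀..x, (q₂ t * f₁ t ^ 2 + q₁ t * f₂ t ^ 2)) =
      f₁ x * f₂ x - f₁ x₀ * f₂ x₀ :=
    intervalIntegral.integral_eq_sub_of_hasDerivAt (fun t _ => hg t)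
      ((((hq₂.mul (hc₁.pow 2)).add (hq₁.mul (hc₂.pow 2)))).intervalIntegrable x₀ x)
  have hd₁ : deriv (fun t => f₁ t ^ 2) x = 2 * f₁ x * (lam * f₁ x + q₁ x * f₂ x) := by
    simp only [pow_two]
    rw [((hf₁ x).fun_mul (hf₁ x)).deriv]
    ring
  have hd₂ : deriv (fun t => f₂ t ^ 2) x = 2 * f₂ x * (q₂ x * f₁ x - lam * f₂ x) := by
    simp only [pow_two]
    rw [((hf₂ x).fun_mul (hf₂ x)).deriv]
    ring
  rw [hint, hd₁, hd₂]
  constructor <;> ring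
end

section
/- Let λ ∈ ℝ, q₁, q₂ : ℝ → ℝ continuous, and let F : ℝ → Matrix (Fin 2) (Fin 2) ℝ be differentiable with F'(x) = ![![λ, q₁(x)], ![q₂(x), −λ]] · F(x), with entries f₁₁, f₁₂ (first row) and f₂₁, f₂₂ (second row). Fix A, B, C ∈ ℝ and define P̃ := A·f₁₁² + B·f₁₁·f₁₂ + C·f₁₂², Q̃ := A·f₂₁² + B·f₂₁·f₂₂ + C·f₂₂², and Φ := A·f₁₁·f₂₁ + (B/2)·(f₁₁·f₂₂ + f₁₂·f₂₁) + C·f₁₂·f₂₂. Then Φ is differentiable and Φ'(x) = q₂(x)·P̃(x) + q₁(x)·Q̃(x) for all x ∈ ℝ. -/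
/-- `P̃ = A·f₁₁² + B·f₁₁·f₁₂ + C·f₁₂²` built from the first row of `F`. -/
def diracP (A B C : ℝ) (F : ℝ → Matrix (Fin 2) (Fin 2) ℝ) (x : ℝ) : ℝ :=
  A * (F x 0 0) ^ 2 + B * (F x 0 0) * (F x 0 1) + C * (F x 0 1) ^ 2

/-- `Q̃ = A·f₂₁² + B·f₂₁·f₂₂ + C·f₂₂²` built from the second row of `F`. -/
def diracQ (A B C : ℝ) (F : ℝ → Matrix (Fin 2) (Fin 2) ℝ) (x : ℝ) : ℝ :=
  A * (F x 1 0) ^ 2 + B * (F x 1 0) * (F x 1 1) + C * (F x 1 1) ^ 2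

/-- Mixed combination `Φ = A·f₁₁·f₂₁ + (B/2)·(f₁₁·f₂₂ + f₁₂·f₂₁) + C·f₁₂·f₂₂`. -/
noncomputable def diracPhi (A B C : ℝ) (F : ℝ → Matrix (Fin 2) (Fin 2) ℝ) (x : ℝ) : ℝ :=
  A * (F x 0 0) * (F x 1 0) + (B / 2) * ((F x 0 0) * (F x 1 1) + (F x 0 1) * (F x 1 0)) +
    C * (F x 0 1) * (F x 1 1)

/-- For a matrix solution `F` of the Dirac equation, the mixed quadratic
combination `Φ` is differentiable with `Φ' = q₂·P̃ + q₁·Q̃`. -/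
theorem dirac_mixed_combination_derivative (lam : ℝ) (q₁ q₂ : ℝ → ℝ)
    (hq₁ : Continuous q₁) (hq₂ : Continuous q₂)
    (F : ℝ → Matrix (Fin 2) (Fin 2) ℝ)
    (hF : ∀ (x : ℝ) (i j : Fin 2),
      HasDerivAt (fun t => F t i j) ((!![lam, q₁ x; q₂ x, -lam] * F x) i j) x)
    (A B C : ℝ) :
    ∀ x : ℝ, HasDerivAt (diracPhi A B C F)
      (q₂ x * diracP A B C F x + q₁ x * diracQ A B C F x) x := by
  intro x
  have h00 := hF x 0 0
  have h01 := hF x 0 1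
  have h10 := hF x 1 0
  have h11 := hF x 1 1
  simp [Matrix.mul_apply, Fin.sum_univ_two] at h00 h01 h10 h11
  have key : HasDerivAt (diracPhi A B C F)
      (A * ((lam * F x 0 0 + q₁ x * F x 1 0) * F x 1 0 + F x 0 0 * (q₂ x * F x 0 0 + -lam * F x 1 0))
        + (B / 2) * (((lam * F x 0 0 + q₁ x * F x 1 0) * F x 1 1 + F x 0 0 * (q₂ x * F x 0 1 + -lam * F x 1 1))
          + ((lam * F x 0 1 + q₁ x * F x 1 1) * F x 1 0 + F x 0 1 * (q₂ x * F x 0 0 + -lam * F x 1 0)))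
        + C * ((lam * F x 0 1 + q₁ x * F x 1 1) * F x 1 1 + F x 0 1 * (q₂ x * F x 0 1 + -lam * F x 1 1))) x := by
    unfold diracPhi
    simpa [mul_assoc, neg_mul, Pi.add_def] using (((h00.mul h10).const_mul A).add
      ((((h00.mul h11).add (h01.mul h10)).const_mul (B / 2)))).add
      ((h01.mul h11).const_mul C)
  convert key using 1
  unfold diracP diracQ
  ring
end

section
/- Let λ ∈ ℝ, q₁, q₂ : ℝ → ℝ continuous, and let F : ℝ → Matrix (Fin 2) (Fin 2) ℝ be differentiable with F'(x) = ![![λ, q₁(x)], ![q₂(x), −λ]] · F(x), with entries f₁₁, f₁₂, f₂₁, f₂₂. Fix A, B, C ∈ ℝ and an open interval I ⊆ ℝ on which P̃ := A·f₁₁² + B·f₁₁·f₁₂ + C·f₁₂² > 0 and Q̃ := A·f₂₁² + B·f₂₁·f₂₂ + C·f₂₂² > 0. Define f̃₁ := √P̃, f̃₂ := √Q̃, Φ := A·f₁₁·f₂₁ + (B/2)·(f₁₁·f₂₂ + f₁₂·f₂₁) + C·f₁₂·f₂₂, and α := Φ − f̃₁·f̃₂. Then f̃₁, f̃₂ are differentiable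 on I and satisfy the deformed (nonlinear) Dirac equation: f̃₁' = λ·f̃₁ + q₁·f̃₂ + q₁·α/f̃₁ and f̃₂' = q₂·f̃₁ − λ·f̃₂ + q₂·α/f̃₂ on I. -/
/-- First component `f̃₁ = √P̃` of the partial solution to the deformed Dirac equation. -/
noncomputable def diracFt₁ (A B C : ℝ) (F : ℝ → Matrix (Fin 2) (Fin 2) ℝ) (x : ℝ) : ℝ :=
  Real.sqrt (diracP A B C F x)

/-- Second component `f̃₂ = √Q̃` of the partial solution to the deformed Dirac equation. -/
noncomputable def diracFt₂ (A B C : ℝ) (F : ℝ → Matrix (Fin 2) (Fin 2) ℝ) (x : ℝ) : ℝ :=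
  Real.sqrt (diracQ A B C F x)

/-- Deformation coefficient `α = Φ − f̃₁·f̃₂`. -/
noncomputable def diracAlpha (A B C : ℝ) (F : ℝ → Matrix (Fin 2) (Fin 2) ℝ) (x : ℝ) : ℝ :=
  diracPhi A B C F x - diracFt₁ A B C F x * diracFt₂ A B C F x

/-- On an open interval where `P̃ > 0` and `Q̃ > 0`, the pair
`f̃ = (√P̃, √Q̃)` is differentiable and solves the deformed (nonlinear) Dirac equation
`f̃₁' = λ·f̃₁ + q₁·f̃₂ + q₁·α/f̃₁`, `f̃₂' = q₂·f̃₁ − λ·f̃₂ + q₂·α/f̃₂`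
with `α = Φ − f̃₁·f̃₂`. -/
theorem deformed_dirac_partial_solution (lam : ℝ) (q₁ q₂ : ℝ → ℝ)
    (hq₁ : Continuous q₁) (hq₂ : Continuous q₂)
    (F : ℝ → Matrix (Fin 2) (Fin 2) ℝ)
    (hF : ∀ (x : ℝ) (i j : Fin 2),
      HasDerivAt (fun t => F t i j) ((!![lam, q₁ x; q₂ x, -lam] * F x) i j) x)
    (A B C : ℝ) (a b : ℝ)
    (hP : ∀ x ∈ Set.Ioo a b, 0 < diracP A B C F x)
    (hQ : ∀ x ∈ Set.Ioo a b, 0 < diracQ A B C F x) :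
    ∀ x ∈ Set.Ioo a b,
      HasDerivAt (diracFt₁ A B C F)
        (lam * diracFt₁ A B C F x + q₁ x * diracFt₂ A B C F x +
          q₁ x * diracAlpha A B C F x / diracFt₁ A B C F x) x ∧
      HasDerivAt (diracFt₂ A B C F)
        (q₂ x * diracFt₁ A B C F x - lam * diracFt₂ A B C F x +
          q₂ x * diracAlpha A B C F x / diracFt₂ A B C F x) x := by

  intro x hx
  have hPx := hP x hx
  have hQx := hQ x hx
  have h00 := hF x 0 0
  have h01 := hF x 0 1
  have h10 := hF x 1 0
  have h11 := hF x 1 1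
  simp only [Matrix.mul_apply, Fin.sum_univ_two, Matrix.of_apply, Matrix.cons_val',
    Matrix.cons_val_zero, Matrix.cons_val_one, Matrix.head_cons, Matrix.empty_val',
    Matrix.cons_val_fin_one, Matrix.head_fin_const] at h00 h01 h10 h11
  have hP' : HasDerivAt (diracP A B C F)
      ((A * ((lam * F x 0 0 + q₁ x * F x 1 0) * F x 0 0 ^ 1 * 2)) +
        ((B * (lam * F x 0 0 + q₁ x * F x 1 0)) * F x 0 1 +
          (B * F x 0 0) * (lam * F x 0 1 + q₁ x * F x 1 1)) +
        (C * ((lam * F x 0 1 + q₁ x * F x 1 1) * F x 0 1 ^ 1 * 2))) x := by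
    have := (((h00.pow 2).const_mul A).add ((h00.const_mul B).mul h01)).add
      ((h01.pow 2).const_mul C)
    convert this using 1
    · rfl
    · rfl
    · rfl
    · push_cast
      ring
  have hQ' : HasDerivAt (diracQ A B C F)
      ((A * ((q₂ x * F x 0 0 + (-lam) * F x 1 0) * F x 1 0 ^ 1 * 2)) +
        ((B * (q₂ x * F x 0 0 + (-lam) * F x 1 0)) * F x 1 1 +
          (B * F x 1 0) * (q₂ x * F x 0 1 + (-lam) * F x 1 1)) +
        (C * ((q₂ x * F x 0 1 + (-lam) * F x 1 1) * F x 1 1 ^ 1 * 2))) x := by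
    have := (((h10.pow 2).const_mul A).add ((h10.const_mul B).mul h11)).add
      ((h11.pow 2).const_mul C)
    convert this using 1
    · rfl
    · rfl
    · rfl
    · push_cast
      ring
  have hsP : Real.sqrt (diracP A B C F x) ≠ 0 := by positivity
  have hsQ : Real.sqrt (diracQ A B C F x) ≠ 0 := by positivity
  have hPsq : Real.sqrt (diracP A B C F x) ^ 2 = diracP A B C F x :=
    Real.sq_sqrt hPx.le
  have hQsq : Real.sqrt (diracQ A B C F x) ^ 2 = diracQ A B C F x :=
    Real.sq_sqrt hQx.le
  constructor
  · have h := hP'.sqrt (ne_of_gt hPx)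
    convert h using 1
    · rfl
    unfold diracAlpha diracFt₁ diracFt₂ diracPhi
    rw [eq_div_iff (by positivity)]
    field_simp
    have hPsq' : Real.sqrt (diracP A B C F x) ^ 2 =
        A * F x 0 0 ^ 2 + B * F x 0 0 * F x 0 1 + C * F x 0 1 ^ 2 := hPsq
    linear_combination (2 * lam) * hPsq'
  · have h := hQ'.sqrt (ne_of_gt hQx)
    convert h using 1
    · rfl
    unfold diracAlpha diracFt₁ diracFt₂ diracPhi
    rw [eq_div_iff (by positivity)]
    field_simp
    have hQsq' : Real.sqrt (diracQ A B C F x) ^ 2 =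
        A * F x 1 0 ^ 2 + B * F x 1 0 * F x 1 1 + C * F x 1 1 ^ 2 := hQsq
    linear_combination (-2 * lam) * hQsq'
end

section
/- Let λ ∈ ℝ, q₁, q₂ : ℝ → ℝ continuous, and let F : ℝ → Matrix (Fin 2) (Fin 2) ℝ be differentiable with F'(x) = ![![λ, q₁(x)], ![q₂(x), −λ]] · F(x), with entries f₁₁, f₁₂, f₂₁, f₂₂. Fix A, B, C ∈ ℝ and an open interval I ⊆ ℝ on which P̃ := A·f₁₁² + B·f₁₁·f₁₂ + C·f₁₂² > 0 and Q̃ := A·f₂₁² + B·f₂₁·f₂₂ + C·f₂₂² > 0, and set f̃₁ := √P̃, f̃₂ := √Q̃, Φ := A·f₁₁·f₂₁ + (B/2)·(f₁₁·f₂₂ + f₁₂·f₂₁) + C·f₁₂·f₂₂, α := Φ − f̃₁·f̃₂. Then α is differentiable on I and satisfies the linear ODE α' = −α·( q₁·f̃₂/f̃₁ + q₂·f̃₁/f̃₂ ) on I. -/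
/-- On an open interval where `P̃ > 0` and `Q̃ > 0`, the deformation
coefficient `α = Φ − f̃₁·f̃₂` is differentiable and satisfies the linear ODE
`α' = −α·(q₁·f̃₂/f̃₁ + q₂·f̃₁/f̃₂)`. -/
theorem deformed_dirac_alpha_ode (lam : ℝ) (q₁ q₂ : ℝ → ℝ)
    (hq₁ : Continuous q₁) (hq₂ : Continuous q₂)
    (F : ℝ → Matrix (Fin 2) (Fin 2) ℝ)
    (hF : ∀ (x : ℝ) (i j : Fin 2),
      HasDerivAt (fun t => F t i j) ((!![lam, q₁ x; q₂ x, -lam] * F x) i j) x)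
    (A B C : ℝ) (a b : ℝ)
    (hP : ∀ x ∈ Set.Ioo a b, 0 < diracP A B C F x)
    (hQ : ∀ x ∈ Set.Ioo a b, 0 < diracQ A B C F x) :
    ∀ x ∈ Set.Ioo a b,
      HasDerivAt (diracAlpha A B C F)
        (-(diracAlpha A B C F x) *
          (q₁ x * diracFt₂ A B C F x / diracFt₁ A B C F x +
           q₂ x * diracFt₁ A B C F x / diracFt₂ A B C F x)) x := by
  intro x hx
  have hP0 := hP x hx
  have hQ0 := hQ x hx
  have h00 : HasDerivAt (fun t => F t 0 0) (lam * F x 0 0 + q₁ x * F x 1 0) x := by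
    simpa [Matrix.mul_apply, Fin.sum_univ_two] using hF x 0 0
  have h01 : HasDerivAt (fun t => F t 0 1) (lam * F x 0 1 + q₁ x * F x 1 1) x := by
    simpa [Matrix.mul_apply, Fin.sum_univ_two] using hF x 0 1
  have h10 : HasDerivAt (fun t => F t 1 0) (q₂ x * F x 0 0 + -lam * F x 1 0) x := by
    simpa [Matrix.mul_apply, Fin.sum_univ_two] using hF x 1 0
  have h11 : HasDerivAt (fun t => F t 1 1) (q₂ x * F x 0 1 + -lam * F x 1 1) x := by
    simpa [Matrix.mul_apply, Fin.sum_univ_two] using hF x 1 1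
  have hPd : HasDerivAt (diracP A B C F)
      (2 * lam * diracP A B C F x + 2 * q₁ x * diracPhi A B C F x) x := by
    have h := (((h00.pow 2).const_mul A).add ((h00.const_mul B).mul h01)).add
      ((h01.pow 2).const_mul C)
    convert h using 1
    · rfl
    · rfl
    · rfl
    simp only [diracP, diracPhi]
    ring
  have hQd : HasDerivAt (diracQ A B C F)
      (-(2 * lam) * diracQ A B C F x + 2 * q₂ x * diracPhi A B C F x) x := by
    have h := (((h10.pow 2).const_mul A).add ((h10.const_mul B).mul h11)).add
      ((h11.pow 2).const_mul C)
    convert h using 1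
    · rfl
    · rfl
    · rfl
    simp only [diracQ, diracPhi]
    ring
  have hΦd : HasDerivAt (diracPhi A B C F)
      (q₁ x * diracQ A B C F x + q₂ x * diracP A B C F x) x := by
    have h := ((((h00.const_mul A).mul h10).add
      (((h00.mul h11).add (h01.mul h10)).const_mul (B / 2))).add
      ((h01.const_mul C).mul h11))
    convert h using 1
    · rfl
    · rfl
    · rfl
    simp only [diracP, diracQ]
    ring
  have hFt1 : HasDerivAt (diracFt₁ A B C F)
      ((2 * lam * diracP A B C F x + 2 * q₁ x * diracPhi A B C F x) /
        (2 * Real.sqrt (diracP A B C F x))) x := hPd.sqrt hP0.ne'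
  have hFt2 : HasDerivAt (diracFt₂ A B C F)
      ((-(2 * lam) * diracQ A B C F x + 2 * q₂ x * diracPhi A B C F x) /
        (2 * Real.sqrt (diracQ A B C F x))) x := hQd.sqrt hQ0.ne'
  have hkey : HasDerivAt (diracAlpha A B C F)
      (q₁ x * diracQ A B C F x + q₂ x * diracP A B C F x -
        ((2 * lam * diracP A B C F x + 2 * q₁ x * diracPhi A B C F x) /
            (2 * Real.sqrt (diracP A B C F x)) * diracFt₂ A B C F x +
          diracFt₁ A B C F x *
            ((-(2 * lam) * diracQ A B C F x + 2 * q₂ x * diracPhi A B C F x) /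
              (2 * Real.sqrt (diracQ A B C F x))))) x := hΦd.sub (hFt1.mul hFt2)
  convert hkey using 1
  have hsP : Real.sqrt (diracP A B C F x) > 0 := Real.sqrt_pos.mpr hP0
  have hsQ : Real.sqrt (diracQ A B C F x) > 0 := Real.sqrt_pos.mpr hQ0
  have hsP2 : Real.sqrt (diracP A B C F x) ^ 2 = diracP A B C F x := Real.sq_sqrt hP0.le
  have hsQ2 : Real.sqrt (diracQ A B C F x) ^ 2 = diracQ A B C F x := Real.sq_sqrt hQ0.le
  simp only [diracAlpha, diracFt₁, diracFt₂]
  set sP := Real.sqrt (diracP A B C F x) with hsPdef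
  set sQ := Real.sqrt (diracQ A B C F x) with hsQdef
  set P := diracP A B C F x
  set Q := diracQ A B C F x
  set Φ := diracPhi A B C F x
  rw [← hsP2, ← hsQ2]
  have h1 : sP ≠ 0 := ne_of_gt hsP
  have h2 : sQ ≠ 0 := ne_of_gt hsQ
  field_simp
  ring
end

section
/- Let λ ∈ ℝ, q₁, q₂ : ℝ → ℝ continuous, and let F : ℝ → Matrix (Fin 2) (Fin 2) ℝ be differentiable with F'(x) = ![![λ, q₁(x)], ![q₂(x), −λ]] · F(x), with entries f₁₁, f₁₂, f₂₁, f₂₂. Fix A, B, C ∈ ℝ and an open interval I ⊆ ℝ on which P̃ := A·f₁₁² + B·f₁₁·f₁₂ + C·f₁₂² > 0 and Q̃ := A·f₂₁² + B·f₂₁·f₂₂ + C·f₂₂² > 0, and set f̃₁ := √P̃, f̃₂ := √Q̃, Φ := A·f₁₁·f₂₁ + (B/2)·(f₁₁·f₂₂ + f₁₂·f₂₁) + C·f₁₂·f₂₂, α := Φ − f̃₁·f̃₂. Then for any x₀, x ∈ I, α(x) = α(x₀) · exp( −∫_{x₀}^{x} ( q₁(t)·f̃₂(t)/f̃₁(t)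 + q₂(t)·f̃₁(t)/f̃₂(t) ) dt ); in particular α is determined on I by its value ᾱ := α(x₀) at a single point. -/
/-- On an open interval where `P̃ > 0` and `Q̃ > 0`, the deformation
coefficient `α = Φ − f̃₁·f̃₂` satisfies
`α(x) = α(x₀)·exp(−∫_{x₀}^{x} (q₁·f̃₂/f̃₁ + q₂·f̃₁/f̃₂))`; in particular `α` is
determined on the interval by its value at a single point. -/
theorem deformed_dirac_alpha_exponential_formula (lam : ℝ) (q₁ q₂ : ℝ → ℝ)
    (hq₁ : Continuous q₁) (hq₂ : Continuous q₂)
    (F : ℝ → Matrix (Fin 2) (Fin 2) ℝ)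
    (hF : ∀ (x : ℝ) (i j : Fin 2),
      HasDerivAt (fun t => F t i j) ((!![lam, q₁ x; q₂ x, -lam] * F x) i j) x)
    (A B C : ℝ) (a b : ℝ)
    (hP : ∀ x ∈ Set.Ioo a b, 0 < diracP A B C F x)
    (hQ : ∀ x ∈ Set.Ioo a b, 0 < diracQ A B C F x) :
    ∀ x₀ ∈ Set.Ioo a b, ∀ x ∈ Set.Ioo a b,
      diracAlpha A B C F x = diracAlpha A B C F x₀ *
        Real.exp (-(∫ t in x₀..x,
          (q₁ t * diracFt₂ A B C F t / diracFt₁ A B C F t +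
           q₂ t * diracFt₁ A B C F t / diracFt₂ A B C F t))) := by
  set g : ℝ → ℝ := fun t =>
      q₁ t * diracFt₂ A B C F t / diracFt₁ A B C F t +
      q₂ t * diracFt₁ A B C F t / diracFt₂ A B C F t with hg
  -- entry derivatives
  have h00 : ∀ y, HasDerivAt (fun t => F t 0 0) (lam * F y 0 0 + q₁ y * F y 1 0) y := fun y => by
    simpa [Matrix.mul_apply, Fin.sum_univ_two] using hF y 0 0
  have h01 : ∀ y, HasDerivAt (fun t => F t 0 1) (lam * F y 0 1 + q₁ y * F y 1 1) y := fun y => by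
    simpa [Matrix.mul_apply, Fin.sum_univ_two] using hF y 0 1
  have h10 : ∀ y, HasDerivAt (fun t => F t 1 0) (q₂ y * F y 0 0 + -lam * F y 1 0) y := fun y => by
    simpa [Matrix.mul_apply, Fin.sum_univ_two] using hF y 1 0
  have h11 : ∀ y, HasDerivAt (fun t => F t 1 1) (q₂ y * F y 0 1 + -lam * F y 1 1) y := fun y => by
    simpa [Matrix.mul_apply, Fin.sum_univ_two] using hF y 1 1
  -- derivatives of P, Q, Phi
  have hPd : ∀ y, HasDerivAt (diracP A B C F)
      (2 * lam * diracP A B C F y + 2 * q₁ y * diracPhi A B C F y) y := by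
    intro y
    have h := ((((h00 y).pow 2).const_mul A).add
      (((h00 y).const_mul B).mul (h01 y))).add (((h01 y).pow 2).const_mul C)
    refine h.congr_deriv ?_
    simp only [diracP, diracPhi]
    push_cast
    ring
  have hQd : ∀ y, HasDerivAt (diracQ A B C F)
      (-(2 * lam) * diracQ A B C F y + 2 * q₂ y * diracPhi A B C F y) y := by
    intro y
    have h := ((((h10 y).pow 2).const_mul A).add
      (((h10 y).const_mul B).mul (h11 y))).add (((h11 y).pow 2).const_mul C)
    refine h.congr_deriv ?_
    simp only [diracQ, diracPhi]
    push_cast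
    ring
  have hΦd : ∀ y, HasDerivAt (diracPhi A B C F)
      (q₁ y * diracQ A B C F y + q₂ y * diracP A B C F y) y := by
    intro y
    have h := ((((h00 y).const_mul A).mul (h10 y)).add
      ((((h00 y).mul (h11 y)).add ((h01 y).mul (h10 y))).const_mul (B / 2))).add
      (((h01 y).const_mul C).mul (h11 y))
    refine h.congr_deriv ?_
    simp only [diracP, diracQ]
    ring
  -- continuity
  have hc00 : Continuous fun t => F t 0 0 := continuous_iff_continuousAt.mpr fun y => (hF y 0 0).continuousAt
  have hc01 : Continuous fun t => F t 0 1 := continuous_iff_continuousAt.mpr fun y => (hF y 0 1).continuousAt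
  have hc10 : Continuous fun t => F t 1 0 := continuous_iff_continuousAt.mpr fun y => (hF y 1 0).continuousAt
  have hc11 : Continuous fun t => F t 1 1 := continuous_iff_continuousAt.mpr fun y => (hF y 1 1).continuousAt
  have hPc : Continuous (diracP A B C F) :=
    ((continuous_const.mul (hc00.pow 2)).add ((continuous_const.mul hc00).mul hc01)).add
      (continuous_const.mul (hc01.pow 2))
  have hQc : Continuous (diracQ A B C F) :=
    ((continuous_const.mul (hc10.pow 2)).add ((continuous_const.mul hc10).mul hc11)).add
      (continuous_const.mul (hc11.pow 2))
  have hF1c : Continuous (diracFt₁ A B C F) := Real.continuous_sqrt.comp hPc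
  have hF2c : Continuous (diracFt₂ A B C F) := Real.continuous_sqrt.comp hQc
  have hgc : ContinuousOn g (Set.Ioo a b) := by
    apply ContinuousOn.add
    · exact (hq₁.continuousOn.mul hF2c.continuousOn).div hF1c.continuousOn
        (fun y hy => (Real.sqrt_pos.mpr (hP y hy)).ne')
    · exact (hq₂.continuousOn.mul hF1c.continuousOn).div hF2c.continuousOn
        (fun y hy => (Real.sqrt_pos.mpr (hQ y hy)).ne')
  -- derivative of alpha
  have hαd : ∀ y ∈ Set.Ioo a b,
      HasDerivAt (diracAlpha A B C F) (-(g y) * diracAlpha A B C F y) y := by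
    intro y hy
    have hPy := hP y hy
    have hQy := hQ y hy
    have hs1 : (0:ℝ) < diracFt₁ A B C F y := Real.sqrt_pos.mpr hPy
    have hs2 : (0:ℝ) < diracFt₂ A B C F y := Real.sqrt_pos.mpr hQy
    have e1 : diracFt₁ A B C F y ^ 2 = diracP A B C F y := Real.sq_sqrt hPy.le
    have e2 : diracFt₂ A B C F y ^ 2 = diracQ A B C F y := Real.sq_sqrt hQy.le
    have hFt1d : HasDerivAt (diracFt₁ A B C F)
        (lam * diracFt₁ A B C F y + q₁ y * diracPhi A B C F y / diracFt₁ A B C F y) y := by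
      have h := (Real.hasDerivAt_sqrt hPy.ne').comp y (hPd y)
      refine h.congr_deriv ?_
      have hr : Real.sqrt (diracP A B C F y) = diracFt₁ A B C F y := rfl
      rw [hr, ← e1]
      field_simp
    have hFt2d : HasDerivAt (diracFt₂ A B C F)
        (-lam * diracFt₂ A B C F y + q₂ y * diracPhi A B C F y / diracFt₂ A B C F y) y := by
      have h := (Real.hasDerivAt_sqrt hQy.ne').comp y (hQd y)
      refine h.congr_deriv ?_
      have hr : Real.sqrt (diracQ A B C F y) = diracFt₂ A B C F y := rfl
      rw [hr, ← e2]
      field_simp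
    have h := (hΦd y).sub (hFt1d.mul hFt2d)
    refine h.congr_deriv ?_
    simp only [hg, diracAlpha]
    rw [← e1, ← e2]
    field_simp
    ring
  -- conclusion
  intro x₀ hx₀ x hx
  set G : ℝ → ℝ := fun y => ∫ t in x₀..y, g t with hG
  have hGd : ∀ y ∈ Set.Ioo a b, HasDerivAt G (g y) y := by
    intro y hy
    have hsub : Set.uIcc x₀ y ⊆ Set.Ioo a b := Set.ordConnected_Ioo.uIcc_subset hx₀ hy
    have hint : IntervalIntegrable g MeasureTheory.volume x₀ y :=
      (hgc.mono hsub).intervalIntegrable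
    exact intervalIntegral.integral_hasDerivAt_right hint
      (hgc.stronglyMeasurableAtFilter isOpen_Ioo y hy)
      (hgc.continuousAt (isOpen_Ioo.mem_nhds hy))
  have hhd : ∀ y ∈ Set.Ioo a b,
      HasDerivAt (fun z => diracAlpha A B C F z * Real.exp (G z)) 0 y := by
    intro y hy
    have h := (hαd y hy).mul ((hGd y hy).exp)
    refine h.congr_deriv ?_
    ring
  have hsub : Set.Icc (min x₀ x) (max x₀ x) ⊆ Set.Ioo a b :=
    Set.Icc_subset_Ioo (lt_min hx₀.1 hx.1) (max_lt hx₀.2 hx.2)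
  have key := constant_of_has_deriv_right_zero
    (f := fun z => diracAlpha A B C F z * Real.exp (G z))
    (fun y hy => ((hhd y (hsub hy)).continuousAt).continuousWithinAt)
    (fun y hy => (hhd y (hsub (Set.Ico_subset_Icc_self hy))).hasDerivWithinAt)
  have hx' : diracAlpha A B C F x * Real.exp (G x)
      = diracAlpha A B C F x₀ * Real.exp (G x₀) :=
    (key x ⟨min_le_right _ _, le_max_right _ _⟩).trans
      (key x₀ ⟨min_le_left _ _, le_max_left _ _⟩).symm
  have hG0 : G x₀ = 0 := intervalIntegral.integral_same
  rw [show (∫ t in x₀..x,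
      (q₁ t * diracFt₂ A B C F t / diracFt₁ A B C F t +
       q₂ t * diracFt₁ A B C F t / diracFt₂ A B C F t)) = G x from rfl]
  rw [Real.exp_neg]
  have h2 : diracAlpha A B C F x * Real.exp (G x) = diracAlpha A B C F x₀ := by
    rw [hx', hG0, Real.exp_zero, mul_one]
  rw [← h2, mul_inv_cancel_right₀ (Real.exp_ne_zero _)]
end
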